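/- Let r ≥ 2 and identify divisor classes D = dH − Σ_{i=1}^r m_i E_i with vectors (d, m_1, …, m_r) ∈ ℝ^{1+r}. A vector (d, m_1, …, m_r) satisfies m_k ≥ 0 for all k and d ≥ m_i + m_j for all i < j if and only if it lies in the convex cone generated by the finitely many vectors H = (1, 0, …, 0), H − E_i = (1, δ_{i}) for 1 ≤ i ≤ r (the vector with d = 1, m_i = 1 and all other coordinates 0), and 2H − Σ_{i∈I} E_i = (2, 1_I) for each subset I ⊆ {1, …, r} (the vector with d = 2, m_i = 1 for i ∈ I and m_i = 0 otherwise). -/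
import Mathlib

open Finset

/-- Small-support case: at most one positive entry. -/
private lemma nef_small (r : ℕ) (hr : 2 ≤ r) (d : ℝ) (m : Fin r → ℝ)
    (hcard : (univ.filter fun i => 0 < m i).card ≤ 1)
    (hm : ∀ k, 0 ≤ m k) (hp : ∀ i j : Fin r, i ≠ j → m i + m j ≤ d) :
    ∃ (a : ℝ) (c : Fin r → ℝ) (t : Finset (Fin r) → ℝ),
      0 ≤ a ∧ (∀ i, 0 ≤ c i) ∧ (∀ I, 0 ≤ t I) ∧
      d = a + (∑ i, c i) + (∑ I : Finset (Fin r), 2 * t I) ∧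
      ∀ k : Fin r, m k = c k + ∑ I ∈ univ.filter (fun I : Finset (Fin r) => k ∈ I), t I := by
  have huniv : 1 < (univ : Finset (Fin r)).card := by
    simp only [card_univ, Fintype.card_fin]; omega
  have hzero : ∑ i ∈ univ.filter (fun i => ¬ 0 < m i), m i = 0 := by
    apply Finset.sum_eq_zero
    intro i hi
    simp only [mem_filter] at hi
    linarith [hm i, hi.2]
  have hsum : ∑ i, m i = ∑ i ∈ univ.filter (fun i => 0 < m i), m i := by
    rw [← Finset.sum_filter_add_sum_filter_not univ (fun i => 0 < m i) m, hzero, add_zero]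
  have hd : ∑ i, m i ≤ d := by
    rw [hsum]
    interval_cases h : (univ.filter fun i => 0 < m i).card
    · rw [Finset.card_eq_zero.mp h, Finset.sum_empty]
      obtain ⟨i, j, hij⟩ := Fintype.exists_pair_of_one_lt_card (by simpa using huniv) (α := Fin r)
      have := hp i j hij
      linarith [hm i, hm j]
    · obtain ⟨i0, hi0⟩ := Finset.card_eq_one.mp h
      rw [hi0, Finset.sum_singleton]
      obtain ⟨j, _, hj⟩ := Finset.exists_mem_ne huniv i0
      have := hp i0 j (Ne.symm hj)
      linarith [hm j]
  refine ⟨d - ∑ i, m i, m, fun _ => 0, by linarith, hm, fun _ => le_rfl, by simp, ?_⟩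
  intro k
  simp

/-- Peeling induction. -/
private lemma nef_aux (r : ℕ) (hr : 2 ≤ r) :
    ∀ (n : ℕ) (d : ℝ) (m : Fin r → ℝ),
      (univ.filter fun i => 0 < m i).card ≤ n →
      (∀ k, 0 ≤ m k) → (∀ i j : Fin r, i ≠ j → m i + m j ≤ d) →
      ∃ (a : ℝ) (c : Fin r → ℝ) (t : Finset (Fin r) → ℝ),
        0 ≤ a ∧ (∀ i, 0 ≤ c i) ∧ (∀ I, 0 ≤ t I) ∧
        d = a + (∑ i, c i) + (∑ I : Finset (Fin r), 2 * t I) ∧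
        ∀ k : Fin r, m k = c k + ∑ I ∈ univ.filter (fun I : Finset (Fin r) => k ∈ I), t I := by
  intro n
  induction n with
  | zero => intro d m hcard hm hp; exact nef_small r hr d m (by omega) hm hp
  | succ n ih =>
    intro d m hcard hm hp
    set S := univ.filter (fun i => 0 < m i) with hS
    by_cases h1 : S.card ≤ 1
    · exact nef_small r hr d m h1 hm hp
    push_neg at h1
    have hSne : S.Nonempty := Finset.card_pos.mp (by omega)
    obtain ⟨i0, hi0S, hi0min⟩ := Finset.exists_min_image S m hSne
    set ε := m i0 with hε
    have hεpos : 0 < ε := (Finset.mem_filter.mp hi0S).2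
    set m' : Fin r → ℝ := fun i => m i - if i ∈ S then ε else 0 with hm'
    have hm'S : ∀ i ∈ S, m' i = m i - ε := by
      intro i hi; simp only [hm', if_pos hi]
    have hm'nS : ∀ i, i ∉ S → m' i = m i := by
      intro i hi; simp only [hm', if_neg hi, sub_zero]
    have hmem : ∀ i, i ∉ S → m i = 0 := by
      intro i hi
      have : ¬ 0 < m i := by simpa [hS] using hi
      linarith [hm i]
    have hm'0 : ∀ k, 0 ≤ m' k := by
      intro k
      by_cases hk : k ∈ S
      · rw [hm'S k hk]; linarith [hi0min k hk]
      · rw [hm'nS k hk]; exact hm k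
    have hpartner : ∀ j : Fin r, ∃ i', i' ∈ S ∧ i' ≠ j := by
      intro j
      obtain ⟨i', hi'S, hi'⟩ := Finset.exists_mem_ne h1 j
      exact ⟨i', hi'S, hi'⟩
    have hp' : ∀ i j : Fin r, i ≠ j → m' i + m' j ≤ d - 2 * ε := by
      intro i j hij
      by_cases hi : i ∈ S <;> by_cases hj : j ∈ S
      · rw [hm'S i hi, hm'S j hj]
        have := hp i j hij; linarith
      · rw [hm'S i hi, hm'nS j hj, hmem j hj]
        obtain ⟨i', hi'S, hi'⟩ := hpartner i
        have h2 := hp i' i hi'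
        have := hi0min i' hi'S
        linarith
      · rw [hm'nS i hi, hm'S j hj, hmem i hi]
        obtain ⟨j', hj'S, hj'⟩ := hpartner j
        have h2 := hp j' j hj'
        have := hi0min j' hj'S
        linarith
      · rw [hm'nS i hi, hm'nS j hj, hmem i hi, hmem j hj]
        obtain ⟨x, hxS, y, hyS, hxy⟩ := Finset.one_lt_card.mp h1
        have h2 := hp x y hxy
        have := hi0min x hxS
        have := hi0min y hyS
        linarith
    have hcard' : (univ.filter fun i => 0 < m' i).card ≤ n := by
      have hsub : (univ.filter fun i => 0 < m' i) ⊆ S.erase i0 := by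
        intro i hi
        simp only [mem_filter, mem_univ, true_and] at hi
        have hiS : i ∈ S := by
          by_contra hiS
          rw [hm'nS i hiS, hmem i hiS] at hi
          exact lt_irrefl 0 hi
        refine Finset.mem_erase.mpr ⟨?_, hiS⟩
        intro heq
        rw [heq, hm'S i0 hi0S] at hi
        linarith
      have := Finset.card_le_card hsub
      have := Finset.card_erase_of_mem hi0S
      omega
    obtain ⟨a', c', t', ha', hc', ht', hd', hmk'⟩ := ih (d - 2 * ε) m' hcard' hm'0 hp'
    refine ⟨a', c', fun I => t' I + if I = S then ε else 0, ha', hc', ?_, ?_, ?_⟩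
    · intro I
      dsimp only
      by_cases h : I = S
      · rw [if_pos h]; linarith [ht' I]
      · rw [if_neg h]; linarith [ht' I]
    · dsimp only
      have hsum2 : (∑ I : Finset (Fin r), 2 * (t' I + if I = S then ε else 0))
          = (∑ I : Finset (Fin r), 2 * t' I) + 2 * ε := by
        have key : ∀ I : Finset (Fin r), 2 * (t' I + if I = S then ε else 0)
            = 2 * t' I + (if I = S then 2 * ε else 0) := by
          intro I; by_cases h : I = S <;> simp [h] <;> ring
        rw [Finset.sum_congr rfl (fun I _ => key I), Finset.sum_add_distrib,
          Finset.sum_ite_eq' univ S (fun _ => 2 * ε)]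
        simp
      rw [hsum2]
      linarith
    · intro k
      dsimp only
      have h1' : (∑ I ∈ univ.filter (fun I : Finset (Fin r) => k ∈ I),
            (t' I + if I = S then ε else 0))
          = (∑ I ∈ univ.filter (fun I : Finset (Fin r) => k ∈ I), t' I)
            + (if k ∈ S then ε else 0) := by
        rw [Finset.sum_add_distrib]
        congr 1
        rw [Finset.sum_ite_eq' (univ.filter (fun I : Finset (Fin r) => k ∈ I)) S (fun _ => ε)]
        simp
      rw [h1']
      have hk' := hmk' k
      by_cases hk : k ∈ S
      · rw [hm'S k hk] at hk'
        rw [if_pos hk]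
        linarith
      · rw [hm'nS k hk] at hk'
        rw [if_neg hk]
        linarith

theorem nef_cone_duality (r : ℕ) (hr : 2 ≤ r) (d : ℝ) (m : Fin r → ℝ) :
    ((∀ k, 0 ≤ m k) ∧ ∀ i j : Fin r, i < j → m i + m j ≤ d) ↔
    ∃ (a : ℝ) (c : Fin r → ℝ) (t : Finset (Fin r) → ℝ),
      0 ≤ a ∧ (∀ i, 0 ≤ c i) ∧ (∀ I, 0 ≤ t I) ∧
      d = a + (∑ i, c i) + (∑ I : Finset (Fin r), 2 * t I) ∧
      ∀ k : Fin r, m k = c k + ∑ I ∈ Finset.univ.filter (fun I : Finset (Fin r) => k ∈ I), t I := by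
  constructor
  · rintro ⟨hm, hp⟩
    refine nef_aux r hr _ d m le_rfl hm ?_
    intro i j hij
    rcases lt_or_gt_of_ne hij with h | h
    · exact hp i j h
    · have := hp j i h; linarith
  · rintro ⟨a, c, t, ha, hc, ht, hd, hmk⟩
    have hts : ∀ k : Fin r, 0 ≤ ∑ I ∈ univ.filter (fun I : Finset (Fin r) => k ∈ I), t I :=
      fun k => Finset.sum_nonneg fun I _ => ht I
    constructor
    · intro k; rw [hmk k]; linarith [hc k, hts k]
    · intro i j hij
      have hcij : c i + c j ≤ ∑ i, c i := by
        rw [← Finset.sum_pair (ne_of_lt hij)]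
        exact Finset.sum_le_sum_of_subset_of_nonneg (Finset.subset_univ _)
          (fun k _ _ => hc k)
      have hti : ∀ k : Fin r, (∑ I ∈ univ.filter (fun I : Finset (Fin r) => k ∈ I), t I)
          ≤ ∑ I : Finset (Fin r), t I :=
        fun k => Finset.sum_le_sum_of_subset_of_nonneg (Finset.filter_subset _ _)
          (fun I _ _ => ht I)
      have h2t : (∑ I : Finset (Fin r), 2 * t I) = 2 * ∑ I : Finset (Fin r), t I := by
        rw [Finset.mul_sum]
      rw [hmk i, hmk j]
      have := hti i
      have := hti j
      rw [h2t] at hd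
      linarith
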